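/- Let h be a nonnegative real-valued random variable with E[h] = 1 and E[h²] < ∞, and let ρ ∈ (0, 1/E[h]) be a real number. Then log₂(1 + ρ·E[h]) + log₂(E[1/(1 + ρh)]) ≤ (log₂ e) · E[h²/(1 + ρh)] · ρ² ≤ (log₂ e) · E[h²] · ρ². -/

import Mathlib

open Real MeasureTheory

/-- Low-SNR gap bound: for a nonnegative random variable `h` with `E[h] = 1`,
finite second moment, and `0 < ρ < 1/E[h]`,
`log₂(1 + ρ E[h]) + log₂ E[1/(1+ρh)] ≤ (log₂ e) E[h²/(1+ρh)] ρ² ≤ (log₂ e) E[h²] ρ²`. -/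
theorem low_snr_gap {Ω : Type*} [MeasurableSpace Ω] (μ : Measure Ω) [IsProbabilityMeasure μ]
    (h : Ω → ℝ) (hpos : ∀ ω, 0 ≤ h ω) (ρ : ℝ)
    (hInt : Integrable h μ) (hmean : (∫ ω, h ω ∂μ) = 1)
    (hInt2 : Integrable (fun ω => (h ω) ^ 2) μ)
    (hInt3 : Integrable (fun ω => 1 / (1 + ρ * h ω)) μ)
    (hInt4 : Integrable (fun ω => (h ω) ^ 2 / (1 + ρ * h ω)) μ)
    (hρ0 : 0 < ρ) (hρ1 : ρ < 1 / ∫ ω, h ω ∂μ) :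
    Real.logb 2 (1 + ρ * ∫ ω, h ω ∂μ) + Real.logb 2 (∫ ω, 1 / (1 + ρ * h ω) ∂μ)
      ≤ Real.logb 2 (Real.exp 1) * (∫ ω, (h ω) ^ 2 / (1 + ρ * h ω) ∂μ) * ρ ^ 2 ∧
    Real.logb 2 (Real.exp 1) * (∫ ω, (h ω) ^ 2 / (1 + ρ * h ω) ∂μ) * ρ ^ 2
      ≤ Real.logb 2 (Real.exp 1) * (∫ ω, (h ω) ^ 2 ∂μ) * ρ ^ 2 := by
  have hden : ∀ ω, 0 < 1 + ρ * h ω := fun ω => by nlinarith [hpos ω]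
  have hρ1' : ρ < 1 := by rw [hmean] at hρ1; simpa using hρ1
  set K := ∫ ω, (h ω) ^ 2 / (1 + ρ * h ω) ∂μ with hK
  have hKnn : 0 ≤ K := integral_nonneg fun ω => div_nonneg (sq_nonneg _) (hden ω).le
  have hident : ∀ ω, 1 / (1 + ρ * h ω)
      = 1 - ρ * h ω + ρ ^ 2 * ((h ω) ^ 2 / (1 + ρ * h ω)) := by
    intro ω
    have := (hden ω).ne'
    field_simp
    ring
  have hA : (∫ ω, 1 / (1 + ρ * h ω) ∂μ) = 1 - ρ + ρ ^ 2 * K := by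
    calc ∫ ω, 1 / (1 + ρ * h ω) ∂μ
        = ∫ ω, (1 - ρ * h ω + ρ ^ 2 * ((h ω) ^ 2 / (1 + ρ * h ω))) ∂μ :=
          integral_congr_ae (Filter.Eventually.of_forall hident)
      _ = 1 - ρ + ρ ^ 2 * K := by
          have hf : Integrable (fun ω => 1 - ρ * h ω) μ :=
            (integrable_const (1:ℝ)).sub (hInt.const_mul ρ)
          have hg : Integrable (fun ω => ρ ^ 2 * ((h ω) ^ 2 / (1 + ρ * h ω))) μ :=
            hInt4.const_mul _
          have hc : Integrable (fun (_ : Ω) => (1:ℝ)) μ := integrable_const 1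
          have hd : Integrable (fun ω => ρ * h ω) μ := hInt.const_mul ρ
          rw [integral_add hf hg, integral_sub hc hd,
            integral_const, integral_const_mul, integral_const_mul, hmean]
          simp [hK]
  have hApos : 0 < (∫ ω, 1 / (1 + ρ * h ω) ∂μ) := by
    rw [hA]; nlinarith
  have hl2 : 0 < Real.log 2 := Real.log_pos one_lt_two
  constructor
  · have h1 : Real.log (1 + ρ) ≤ ρ := by
      have := Real.log_le_sub_one_of_pos (show (0:ℝ) < 1 + ρ by linarith)
      linarith
    have h2 : Real.log (∫ ω, 1 / (1 + ρ * h ω) ∂μ) ≤ -ρ + ρ ^ 2 * K := by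
      have h' := Real.log_le_sub_one_of_pos hApos
      linarith [hA, h']
    rw [hmean]
    calc Real.logb 2 (1 + ρ * 1) + Real.logb 2 (∫ ω, 1 / (1 + ρ * h ω) ∂μ)
        = (Real.log (1 + ρ) + Real.log (∫ ω, 1 / (1 + ρ * h ω) ∂μ)) / Real.log 2 := by
          rw [Real.logb, Real.logb, ← add_div, mul_one]
      _ ≤ (ρ ^ 2 * K) / Real.log 2 := by
          gcongr
          linarith
      _ = Real.logb 2 (Real.exp 1) * K * ρ ^ 2 := by
          rw [Real.logb, Real.log_exp]; field_simp
  · have hKle : K ≤ ∫ ω, (h ω) ^ 2 ∂μ := by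
      apply integral_mono hInt4 hInt2
      intro ω
      have h1 : (1:ℝ) ≤ 1 + ρ * h ω := by nlinarith [hpos ω]
      calc (h ω) ^ 2 / (1 + ρ * h ω) ≤ (h ω) ^ 2 / 1 :=
            div_le_div_of_nonneg_left (sq_nonneg _) one_pos h1
        _ = (h ω) ^ 2 := div_one _
    have hlb : 0 ≤ Real.logb 2 (Real.exp 1) := by
      have : (1:ℝ) ≤ Real.exp 1 := by
        have := Real.exp_one_gt_d9; linarith
      exact Real.logb_nonneg one_lt_two this
    have := mul_le_mul_of_nonneg_left hKle hlb
    nlinarith [sq_nonneg ρ]
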